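/- There is a universal constant c > 0 such that the following holds. Let p, q be distributions on [k] with 0 < d_h²(p,q) ≤ 1/e, and set α := log(1/d_h²(p,q)) (so α ≥ 1). For every ε ≥ 1 there exists an ε-LDP channel T from [k] to [2] such that d_h²(Tp, Tq) ≥ c · max( d_TV(p,q)², (d_h²(p,q)/α) · min(1, e^ε·d_h²(p,q)/α) ). -/

import Mathlib

open scoped Classical ENNReal
open Finset

noncomputable section

/-- `p` is a probability distribution on `Fin k`. -/
def IsDist {k : ℕ} (p : Fin k → ℝ) : Prop :=
  (∀ i, 0 ≤ p i) ∧ ∑ i, p i = 1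

/-- `T` is a channel from `[k]` to `[ℓ]`: nonnegative entries, columns sum to 1. -/
def IsChannel {ℓ k : ℕ} (T : Matrix (Fin ℓ) (Fin k) ℝ) : Prop :=
  (∀ r c, 0 ≤ T r c) ∧ ∀ c, ∑ r, T r c = 1

/-- Squared Hellinger divergence `d_h²(p,q) = Σ_i (√p_i − √q_i)²`. -/
def hellingerSq {k : ℕ} (p q : Fin k → ℝ) : ℝ :=
  ∑ i, (Real.sqrt (p i) - Real.sqrt (q i)) ^ 2

/-- Total variation distance `d_TV(p,q) = (1/2) Σ_i |p_i − q_i|`. -/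
def tvDist {k : ℕ} (p q : Fin k → ℝ) : ℝ :=
  (1 / 2) * ∑ i, |p i - q i|

/-- `T` is an `ε`-LDP channel: `T(r,c) ≤ e^ε T(r,c')` for all rows `r`, columns `c, c'`. -/
def IsLDP {ℓ k : ℕ} (ε : ℝ) (T : Matrix (Fin ℓ) (Fin k) ℝ) : Prop :=
  IsChannel T ∧ ∀ r c c', T r c ≤ Real.exp ε * T r c'

lemma sqdiff (x y : ℝ) (hy : 0 ≤ y) (hxy : y ≤ x) :
    (x - y)^2 ≤ (4*x) * (Real.sqrt x - Real.sqrt y)^2 := by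
  have hx : 0 ≤ x := le_trans hy hxy
  have h1 : Real.sqrt y ≤ Real.sqrt x := Real.sqrt_le_sqrt hxy
  have hsx := Real.sq_sqrt hx
  have hsy := Real.sq_sqrt hy
  have h2 : (Real.sqrt x - Real.sqrt y) * (Real.sqrt x + Real.sqrt y) = x - y := by
    nlinarith
  calc (x-y)^2 = (Real.sqrt x - Real.sqrt y)^2 * (Real.sqrt x + Real.sqrt y)^2 := by
        rw [← mul_pow, h2]
    _ ≤ (4*x) * (Real.sqrt x - Real.sqrt y)^2 := by
        nlinarith [sq_nonneg (Real.sqrt x - Real.sqrt y)]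

lemma hell_comm {k : ℕ} (p q : Fin k → ℝ) : hellingerSq p q = hellingerSq q p := by
  unfold hellingerSq
  exact Finset.sum_congr rfl fun i _ => by ring

lemma sum_le_one {k : ℕ} (p : Fin k → ℝ) (hp : IsDist p) (S : Finset (Fin k)) :
    ∑ i ∈ S, p i ≤ 1 := by
  rw [← hp.2]
  exact Finset.sum_le_sum_of_subset_of_nonneg (Finset.subset_univ S) (fun i _ _ => hp.1 i)

lemma tv_eq {k : ℕ} (p q : Fin k → ℝ) (hp : IsDist p) (hq : IsDist q) :
    tvDist p q = (∑ i ∈ Finset.univ.filter (fun i => q i < p i), p i)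
      - ∑ i ∈ Finset.univ.filter (fun i => q i < p i), q i := by
  unfold tvDist
  have hzero : ∑ i, (p i - q i) = (0:ℝ) := by
    rw [Finset.sum_sub_distrib, hp.2, hq.2]; ring
  have hsplit : ∑ i ∈ Finset.univ.filter (fun i => q i < p i), (p i - q i)
      + ∑ i ∈ Finset.univ.filter (fun i => ¬ q i < p i), (p i - q i)
      = ∑ i, (p i - q i) := Finset.sum_filter_add_sum_filter_not _ _ _
  have habs : ∑ i ∈ Finset.univ.filter (fun i => q i < p i), |p i - q i|
      + ∑ i ∈ Finset.univ.filter (fun i => ¬ q i < p i), |p i - q i|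
      = ∑ i, |p i - q i| := Finset.sum_filter_add_sum_filter_not _ _ _
  have e1 : ∑ i ∈ Finset.univ.filter (fun i => q i < p i), |p i - q i|
      = ∑ i ∈ Finset.univ.filter (fun i => q i < p i), (p i - q i) := by
    refine Finset.sum_congr rfl fun i hi => ?_
    rw [Finset.mem_filter] at hi
    exact abs_of_pos (by linarith [hi.2])
  have e2 : ∑ i ∈ Finset.univ.filter (fun i => ¬ q i < p i), |p i - q i|
      = - ∑ i ∈ Finset.univ.filter (fun i => ¬ q i < p i), (p i - q i) := by
    rw [← Finset.sum_neg_distrib]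
    refine Finset.sum_congr rfl fun i hi => ?_
    rw [Finset.mem_filter] at hi
    have : p i ≤ q i := le_of_not_gt hi.2
    rw [abs_of_nonpos (by linarith)]
  have e3 : ∑ i ∈ Finset.univ.filter (fun i => q i < p i), (p i - q i)
      = (∑ i ∈ Finset.univ.filter (fun i => q i < p i), p i)
        - ∑ i ∈ Finset.univ.filter (fun i => q i < p i), q i :=
    Finset.sum_sub_distrib _ _
  linarith [hsplit, habs, e1, e2, e3, hzero]




lemma arith_tv (E u t : ℝ) (hE : Real.exp 1 ≤ E) (hu0 : 0 ≤ u) (hu1 : u ≤ 1) :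
    (1/2^20) * t^2 ≤ (E-1)^2 * t^2 / ((E+1) * (4*(1+(E-1)*u))) := by
  have h2 : (2:ℝ) ≤ E := le_trans (by nlinarith [Real.exp_one_gt_d9]) hE
  have hx : 0 ≤ (E-1)*u := mul_nonneg (by linarith) hu0
  have hD : 0 < (E+1) * (4*(1+(E-1)*u)) := by nlinarith
  rw [le_div_iff₀ hD]
  have hDle : (E+1) * (4*(1+(E-1)*u)) ≤ 8*E^2 := by nlinarith
  have ht := sq_nonneg t
  have key : (1/2^20) * (8*E^2) ≤ (E-1)^2 := by nlinarith
  nlinarith [mul_le_mul_of_nonneg_left hDle (mul_nonneg (by norm_num : (0:ℝ) ≤ 1/2^20) ht),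
    mul_le_mul_of_nonneg_right key ht]

set_option maxHeartbeats 1000000 in
lemma arith_main (E m u v : ℝ) (hE : Real.exp 1 ≤ E) (hm0 : 0 < m)
    (hv : 0 ≤ v) (hvu : v ≤ u) (hu1 : u ≤ 1)
    (hum : m/64 ≤ u) (huv : m/64 * u ≤ (u-v)^2) :
    (1/2^20) * (m * min 1 (E * m)) ≤ (E-1)^2 * (u - v)^2 / ((E+1) * (4*(1+(E-1)*u))) := by
  have h2 : (2:ℝ) ≤ E := le_trans (by nlinarith [Real.exp_one_gt_d9]) hE
  have hu0 : 0 < u := lt_of_lt_of_le (by positivity) hum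
  have hx : 0 ≤ (E-1)*u := mul_nonneg (by linarith) hu0.le
  have hD : 0 < (E+1) * (4*(1+(E-1)*u)) := by nlinarith
  rw [le_div_iff₀ hD]
  have hum' : m/64 ≤ u := hum
  have hmin0 : 0 ≤ min 1 (E*m) := le_min (by norm_num) (by positivity)
  rcases le_or_gt 1 ((E-1)*u) with hc | hc
  · -- min ≤ 1 ; D ≤ 32 (E-1)^2 u
    have hDle : (E+1) * (4*(1+(E-1)*u)) ≤ 32 * ((E-1)^2 * u) := by nlinarith
    have hmm : m * min 1 (E*m) ≤ m := by
      nlinarith [min_le_left (1:ℝ) (E*m)]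
    have hL : (1/2^20) * (m * min 1 (E*m)) * ((E+1) * (4*(1+(E-1)*u)))
        ≤ (1/2^20) * m * (32 * ((E-1)^2 * u)) := by
      have h0 : 0 ≤ m * min 1 (E*m) := mul_nonneg hm0.le hmin0
      have := mul_le_mul hmm hDle hD.le hm0.le
      nlinarith
    have hR : (1/64) * ((E-1)^2 * (m * u)) ≤ (E-1)^2 * (u-v)^2 := by
      have := mul_le_mul_of_nonneg_left huv (sq_nonneg (E-1))
      nlinarith
    nlinarith [mul_nonneg (mul_nonneg (sq_nonneg (E-1)) hm0.le) hu0.le]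
  · have hmin : min 1 (E*m) ≤ E*m := min_le_right _ _
    have hDle : (E+1) * (4*(1+(E-1)*u)) ≤ 16 * E := by nlinarith
    have hmm : m * min 1 (E*m) ≤ E * m^2 := by nlinarith
    have hL : (1/2^20) * (m * min 1 (E*m)) * ((E+1) * (4*(1+(E-1)*u)))
        ≤ (1/2^20) * ((E*m^2) * (16*E)) := by
      have h0 : 0 ≤ m * min 1 (E*m) := mul_nonneg hm0.le hmin0
      have hEm2 : 0 ≤ E*m^2 := by positivity
      have h3 := mul_le_mul hmm hDle hD.le hEm2
      have h4 : 0 ≤ (1:ℝ)/2^20 := by norm_num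
      calc (1/2^20) * (m * min 1 (E*m)) * ((E+1) * (4*(1+(E-1)*u)))
          = (1/2^20) * ((m * min 1 (E*m)) * ((E+1) * (4*(1+(E-1)*u)))) := by ring
        _ ≤ (1/2^20) * ((E*m^2) * (16*E)) := by
            exact mul_le_mul_of_nonneg_left h3 h4
    have hA1 : m/64 * (m/64) ≤ (u-v)^2 := by
      have := mul_le_mul_of_nonneg_left hum' (by positivity : (0:ℝ) ≤ m/64)
      linarith
    have hA2 : (E/2)^2 * (m/64 * (m/64)) ≤ (E-1)^2 * (u-v)^2 := by
      have hq : (E/2)^2 ≤ (E-1)^2 := by nlinarith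
      exact mul_le_mul hq hA1 (by positivity) (sq_nonneg _)
    have hmid : (1/2^20) * ((E*m^2) * (16*E)) ≤ (E/2)^2 * (m/64 * (m/64)) := by
      nlinarith [sq_nonneg (E*m)]
    linarith

set_option maxHeartbeats 1000000 in
lemma rr_bound {k : ℕ} (p q : Fin k → ℝ) (hp : IsDist p) (hq : IsDist q) (ε : ℝ)
    (hε : 1 ≤ ε) (S : Finset (Fin k)) (hvu : ∑ i ∈ S, q i ≤ ∑ i ∈ S, p i) :
    ∃ T : Matrix (Fin 2) (Fin k) ℝ, IsLDP ε T ∧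
      (Real.exp ε - 1)^2 * ((∑ i ∈ S, p i) - ∑ i ∈ S, q i)^2 /
          ((Real.exp ε + 1) * (4 * (1 + (Real.exp ε - 1) * ∑ i ∈ S, p i)))
        ≤ hellingerSq (T.mulVec p) (T.mulVec q) := by
  set E := Real.exp ε with hEdef
  have hE1 : 1 ≤ E := by
    rw [hEdef]; nlinarith [Real.add_one_le_exp ε]
  have hE0 : 0 < E := lt_of_lt_of_le one_pos hE1
  have hβ : (0:ℝ) < E + 1 := by linarith
  set u := ∑ i ∈ S, p i with hu
  set v := ∑ i ∈ S, q i with hv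
  have hu0 : 0 ≤ u := Finset.sum_nonneg fun i _ => hp.1 i
  have hv0 : 0 ≤ v := Finset.sum_nonneg fun i _ => hq.1 i
  -- the channel
  refine ⟨Matrix.of (fun r i =>
    if i ∈ S then (if r = 0 then E / (E+1) else 1 / (E+1))
    else (if r = 0 then 1 / (E+1) else E / (E+1))), ?_, ?_⟩
  · have hb1 : (1:ℝ)/(E+1) ≤ E/(E+1) := by gcongr
    have key : ∀ r c, 1/(E+1) ≤ (Matrix.of (fun r i =>
        if i ∈ S then (if r = 0 then E / (E+1) else 1 / (E+1))
        else (if r = 0 then 1 / (E+1) else E / (E+1))) : Matrix (Fin 2) (Fin k) ℝ) r c ∧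
        (Matrix.of (fun r i =>
        if i ∈ S then (if r = 0 then E / (E+1) else 1 / (E+1))
        else (if r = 0 then 1 / (E+1) else E / (E+1))) : Matrix (Fin 2) (Fin k) ℝ) r c ≤ E/(E+1) := by
      intro r c
      simp only [Matrix.of_apply]
      split_ifs <;> constructor <;> linarith [hb1]
    constructor
    · constructor
      · intro r c
        refine le_trans (by positivity) (key r c).1
      · intro c
        rw [Fin.sum_univ_two]
        simp only [Matrix.of_apply, if_pos, if_neg (show ¬(1:Fin 2) = 0 by decide)]
        split_ifs <;> field_simp <;> ring
    · intro r c c'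
      refine le_trans (key r c).2 ?_
      rw [← hEdef]
      calc E/(E+1) = E * (1/(E+1)) := by rw [mul_one_div]
        _ ≤ E * _ := by
            apply mul_le_mul_of_nonneg_left (key r c').1 hE0.le
  · -- the bound
    have hE1' : (0:ℝ) ≤ E - 1 := by linarith
    have comp : ∀ (w : Fin k → ℝ), (∑ i, w i = 1) →
        ∑ i, (if i ∈ S then E/(E+1) else 1/(E+1)) * w i
          = (1 + (E-1) * ∑ i ∈ S, w i)/(E+1) := by
      intro w hw1
      have hpt : ∀ i, (if i ∈ S then E/(E+1) else 1/(E+1)) * w i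
          = (1/(E+1))*w i + (if i ∈ S then ((E-1)/(E+1))*w i else 0) := by
        intro i; split_ifs <;> ring
      rw [Finset.sum_congr rfl (fun i _ => hpt i), Finset.sum_add_distrib,
        Finset.sum_ite_mem, Finset.univ_inter, ← Finset.mul_sum, ← Finset.mul_sum, hw1]
      field_simp
    have hTp0 : (Matrix.of (fun r i =>
        if i ∈ S then (if r = 0 then E / (E+1) else 1 / (E+1))
        else (if r = 0 then 1 / (E+1) else E / (E+1))) : Matrix (Fin 2) (Fin k) ℝ).mulVec p 0
        = (1 + (E-1) * u)/(E+1) := by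
      rw [hu]
      simp only [Matrix.mulVec, dotProduct, Matrix.of_apply, if_pos rfl]
      exact comp p hp.2
    have hTq0 : (Matrix.of (fun r i =>
        if i ∈ S then (if r = 0 then E / (E+1) else 1 / (E+1))
        else (if r = 0 then 1 / (E+1) else E / (E+1))) : Matrix (Fin 2) (Fin k) ℝ).mulVec q 0
        = (1 + (E-1) * v)/(E+1) := by
      rw [hv]
      simp only [Matrix.mulVec, dotProduct, Matrix.of_apply, if_pos rfl]
      exact comp q hq.2
    set x := (1 + (E-1)*u)/(E+1) with hxdef
    set y := (1 + (E-1)*v)/(E+1) with hydef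
    have hy0 : 0 ≤ y := by
      rw [hydef]
      apply div_nonneg _ hβ.le
      nlinarith [mul_nonneg hE1' hv0]
    have hyx : y ≤ x := by
      rw [hxdef, hydef]
      have hnum : 1+(E-1)*v ≤ 1+(E-1)*u := by nlinarith [mul_le_mul_of_nonneg_left hvu hE1']
      exact div_le_div_of_nonneg_right hnum hβ.le
    have hsq := sqdiff x y hy0 hyx
    have hx4 : (0:ℝ) < 1 + (E-1)*u := by nlinarith [mul_nonneg hE1' hu0]
    have hD : (0:ℝ) < (E+1)*(4*(1+(E-1)*u)) := by nlinarith
    have hge : (Real.sqrt x - Real.sqrt y)^2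
        ≤ hellingerSq
          ((Matrix.of (fun r i =>
            if i ∈ S then (if r = 0 then E / (E+1) else 1 / (E+1))
            else (if r = 0 then 1 / (E+1) else E / (E+1))) : Matrix (Fin 2) (Fin k) ℝ).mulVec p)
          ((Matrix.of (fun r i =>
            if i ∈ S then (if r = 0 then E / (E+1) else 1 / (E+1))
            else (if r = 0 then 1 / (E+1) else E / (E+1))) : Matrix (Fin 2) (Fin k) ℝ).mulVec q) := by
      unfold hellingerSq
      rw [Fin.sum_univ_two, hTp0, hTq0]
      nlinarith [sq_nonneg (Real.sqrt ((Matrix.of (fun r i =>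
            if i ∈ S then (if r = 0 then E / (E+1) else 1 / (E+1))
            else (if r = 0 then 1 / (E+1) else E / (E+1))) : Matrix (Fin 2) (Fin k) ℝ).mulVec p 1)
            - Real.sqrt ((Matrix.of (fun r i =>
            if i ∈ S then (if r = 0 then E / (E+1) else 1 / (E+1))
            else (if r = 0 then 1 / (E+1) else E / (E+1))) : Matrix (Fin 2) (Fin k) ℝ).mulVec q 1))]
    refine le_trans ?_ hge
    rw [div_le_iff₀ hD]
    have key : (E+1)*(x-y) = (E-1)*(u-v) := by
      rw [hxdef, hydef]
      field_simp
      ring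
    have key2 : (E+1)^2*(4*x) = (E+1)*(4*(1+(E-1)*u)) := by
      rw [hxdef]
      field_simp
    have e1 : (E-1)^2*(u-v)^2 = (E+1)^2 * (x-y)^2 := by
      calc (E-1)^2*(u-v)^2 = ((E-1)*(u-v))^2 := by ring
        _ = ((E+1)*(x-y))^2 := by rw [key]
        _ = (E+1)^2 * (x-y)^2 := by ring
    have e2 := mul_le_mul_of_nonneg_left hsq (sq_nonneg (E+1))
    calc (E-1)^2*(u-v)^2 = (E+1)^2*(x-y)^2 := e1
      _ ≤ (E+1)^2*(4*x*(Real.sqrt x - Real.sqrt y)^2) := e2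
      _ = (Real.sqrt x - Real.sqrt y)^2 * ((E+1)*(4*(1+(E-1)*u))) := by
          rw [show (E+1)^2*(4*x*(Real.sqrt x - Real.sqrt y)^2)
            = ((E+1)^2*(4*x))*(Real.sqrt x - Real.sqrt y)^2 from by ring, key2]
          ring

set_option maxHeartbeats 2000000 in
lemma lemA' {k : ℕ} (a b : Fin k → ℝ) (h α : ℝ)
    (ha : ∀ i, 0 ≤ a i) (hb : ∀ i, 0 ≤ b i)
    (hpa : ∑ i, (a i)^2 ≤ 1)
    (hα : 1 ≤ α) (hh : 0 < h) (hh2 : h ≤ 1/2)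
    (hexp : 1/h ≤ Real.exp α)
    (hside : h / 2 ≤ ∑ i ∈ Finset.univ.filter (fun i => b i < a i), (a i - b i)^2) :
    ∃ S : Finset (Fin k),
      (∑ i ∈ S, (b i)^2) ≤ (∑ i ∈ S, (a i)^2) ∧
      h/α/64 ≤ ∑ i ∈ S, (a i)^2 ∧
      h/α/64 * (∑ i ∈ S, (a i)^2) ≤ ((∑ i ∈ S, (a i)^2) - ∑ i ∈ S, (b i)^2)^2 := by
  have hα0 : (0:ℝ) < α := lt_of_lt_of_le one_pos hα
  have hm0 : 0 < h/α := div_pos hh hα0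
  have hmh : h/α ≤ h := div_le_self hh.le hα
  set P := Finset.univ.filter (fun i => b i < a i) with hP
  set S₀ := P.filter (fun i => a i ≤ 2*(a i - b i)) with hS₀
  by_cases hc : h/8 ≤ ∑ i ∈ S₀, (a i - b i)^2
  · -- Case 1 : S₀ works
    refine ⟨S₀, ?_, ?_, ?_⟩ <;>
    · have mem : ∀ i ∈ S₀, b i < a i ∧ a i ≤ 2*(a i - b i) := by
        intro i hi
        rw [hS₀, Finset.mem_filter, hP, Finset.mem_filter] at hi
        exact ⟨hi.1.2, hi.2⟩
      have hu0 : (0:ℝ) ≤ ∑ i ∈ S₀, (a i)^2 := Finset.sum_nonneg fun i _ => sq_nonneg _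
      have hv4 : ∑ i ∈ S₀, (b i)^2 ≤ (∑ i ∈ S₀, (a i)^2)/4 := by
        rw [Finset.sum_div]
        refine Finset.sum_le_sum fun i hi => ?_
        obtain ⟨h1, h2⟩ := mem i hi
        have := hb i
        nlinarith
      have hu8 : h/8 ≤ ∑ i ∈ S₀, (a i)^2 := by
        refine le_trans hc (Finset.sum_le_sum fun i hi => ?_)
        obtain ⟨h1, h2⟩ := mem i hi
        have := hb i
        nlinarith
      first
      | linarith
      | nlinarith [mul_le_mul_of_nonneg_right hu8 hu0, mul_le_mul_of_nonneg_right hmh hu0]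
  · -- Case 2 : bucket argument
    push_neg at hc
    set P' := P.filter (fun i => ¬(a i ≤ 2*(a i - b i))) with hP'
    have hsplit : ∑ i ∈ S₀, (a i - b i)^2 + ∑ i ∈ P', (a i - b i)^2
        = ∑ i ∈ P, (a i - b i)^2 := Finset.sum_filter_add_sum_filter_not P _ _
    have hP'big : 3*h/8 ≤ ∑ i ∈ P', (a i - b i)^2 := by linarith
    set J := ⌈3*α⌉₊ with hJdef
    have hJ3 : 3*α ≤ (J:ℝ) := Nat.le_ceil _
    have hJ4 : (J:ℝ) ≤ 4*α := by
      have := Nat.ceil_lt_add_one (by positivity : (0:ℝ) ≤ 3*α)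
      linarith
    have hJ0 : (0:ℝ) < (J:ℝ) := by linarith
    have hJ0' : 0 < J := by exact_mod_cast hJ0
    set P'' := P'.filter (fun i => a i < 2^(J+1)*(a i - b i)) with hP''
    set Tail := P'.filter (fun i => ¬(a i < 2^(J+1)*(a i - b i))) with hTail
    have hsplit2 : ∑ i ∈ P'', (a i - b i)^2 + ∑ i ∈ Tail, (a i - b i)^2
        = ∑ i ∈ P', (a i - b i)^2 := Finset.sum_filter_add_sum_filter_not P' _ _
    -- tail bound
    have htail : ∑ i ∈ Tail, (a i - b i)^2 ≤ h/8 := by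
      have step1 : ∑ i ∈ Tail, (a i - b i)^2 ≤ ∑ i ∈ Tail, (a i)^2 / 4^(J+1) := by
        refine Finset.sum_le_sum fun i hi => ?_
        rw [hTail, Finset.mem_filter, hP', Finset.mem_filter, hP, Finset.mem_filter] at hi
        obtain ⟨⟨⟨-, hba⟩, -⟩, hnl⟩ := hi
        push_neg at hnl
        have hd0 : 0 ≤ a i - b i := by linarith
        have h2 : (2:ℝ)^(J+1)*(a i - b i) ≤ a i := hnl
        have hsq : ((2:ℝ)^(J+1))^2*(a i - b i)^2 ≤ (a i)^2 := by
          calc ((2:ℝ)^(J+1))^2*(a i - b i)^2 = ((2:ℝ)^(J+1)*(a i - b i))^2 := by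
                rw [mul_pow]
            _ ≤ (a i)^2 := by
                apply pow_le_pow_left₀ (mul_nonneg (by positivity) hd0) h2
        have h44 : ((2:ℝ)^(J+1))^2 = 4^(J+1) := by
          rw [← pow_mul, show (4:ℝ) = 2^2 by norm_num, ← pow_mul]; ring_nf
        rw [le_div_iff₀ (by positivity : (0:ℝ) < 4^(J+1))]
        calc (a i - b i)^2 * 4^(J+1) = 4^(J+1) * (a i - b i)^2 := by ring
          _ = ((2:ℝ)^(J+1))^2*(a i - b i)^2 := by rw [h44]
          _ ≤ (a i)^2 := hsq
      have step2 : ∑ i ∈ Tail, (a i)^2 / 4^(J+1) ≤ 1/4^(J+1) := by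
        rw [← Finset.sum_div]
        apply div_le_div_of_nonneg_right ?_ (by positivity : (0:ℝ) ≤ (4:ℝ)^(J+1))
        exact le_trans (Finset.sum_le_sum_of_subset_of_nonneg (Finset.subset_univ _)
          (fun i _ _ => sq_nonneg _)) hpa
      have step3 : (1:ℝ)/4^(J+1) ≤ h/8 := by
        have hJexp : Real.exp (4*α) ≤ (4:ℝ)^J := by
          have l2 : (0.6931471803:ℝ) < Real.log 2 := Real.log_two_gt_d9
          have l4 : Real.log 4 = 2 * Real.log 2 := by
            rw [show (4:ℝ) = 2^2 by norm_num, Real.log_pow]; push_cast; ring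
          have hle4 : 4*α ≤ (J:ℝ) * Real.log 4 := by nlinarith
          calc Real.exp (4*α) ≤ Real.exp ((J:ℝ) * Real.log 4) := Real.exp_le_exp.mpr hle4
            _ = (Real.exp (Real.log 4))^J := by
                rw [← Real.exp_nat_mul]
            _ = (4:ℝ)^J := by rw [Real.exp_log (by norm_num : (0:ℝ) < 4)]
        have hJ4' : (1/h)^4 ≤ (4:ℝ)^J := by
          calc (1/h)^4 ≤ (Real.exp α)^4 := by
                apply pow_le_pow_left₀ (by positivity) hexp
            _ = Real.exp ((4:ℕ) * α) := by rw [Real.exp_nat_mul]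
            _ ≤ (4:ℝ)^J := by push_cast; exact hJexp
        have e2 : 1 ≤ h^4 * 4^J := by
          have := mul_le_mul_of_nonneg_left hJ4' (by positivity : (0:ℝ) ≤ h^4)
          calc (1:ℝ) = h^4 * (1/h)^4 := by field_simp
            _ ≤ h^4 * 4^J := this
        have e3 : 8 * h^3 ≤ 1 := by nlinarith [pow_le_pow_left₀ hh.le hh2 3]
        have hX0 : (0:ℝ) ≤ h*4^J := by positivity
        rw [div_le_div_iff₀ (by positivity) (by norm_num)]
        have hpow : (4:ℝ)^(J+1) = 4*4^J := by ring
        nlinarith [mul_le_mul_of_nonneg_right e3 hX0]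
      calc ∑ i ∈ Tail, (a i - b i)^2 ≤ 1/4^(J+1) := le_trans step1 step2
        _ ≤ h/8 := step3
    have hPbig : h/4 ≤ ∑ i ∈ P'', (a i - b i)^2 := by linarith
    -- buckets
    set E : ℕ → Finset (Fin k) := fun j =>
      P''.filter (fun i => 2^(j+1)*(a i - b i) ≤ a i ∧ a i < 2^(j+2)*(a i - b i)) with hE
    have cover : ∀ i ∈ P'', ∃ j, j ∈ Finset.range J ∧ i ∈ E j := by
      intro i hi
      have hi' := hi
      rw [hP'', Finset.mem_filter, hP', Finset.mem_filter, hP, Finset.mem_filter] at hi'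
      obtain ⟨⟨⟨-, hba⟩, hnl⟩, hJl⟩ := hi'
      push_neg at hnl
      have hd0 : 0 < a i - b i := by linarith
      have hQ0 : (2:ℝ)^(0+1)*(a i - b i) ≤ a i := by norm_num; linarith
      have hmono : ∀ j, (2:ℝ)^(j+1)*(a i - b i) ≤ a i → j < J := by
        intro j hQj
        have hlt : (2:ℝ)^(j+1) * (a i - b i) < 2^(J+1)*(a i - b i) := lt_of_le_of_lt hQj hJl
        have : (2:ℝ)^(j+1) < 2^(J+1) := lt_of_mul_lt_mul_right hlt hd0.le
        have := (pow_lt_pow_iff_right₀ (by norm_num : (1:ℝ) < 2)).mp this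
        omega
      obtain ⟨j₀, hQj₀, hj₀J, hnotQ⟩ : ∃ j₀, ((2:ℝ)^(j₀+1)*(a i - b i) ≤ a i) ∧ j₀ < J
          ∧ ¬((2:ℝ)^(j₀+1+1)*(a i - b i) ≤ a i) := by
        have hspec := Nat.findGreatest_spec
          (P := fun j => (2:ℝ)^(j+1)*(a i - b i) ≤ a i) (Nat.zero_le J) hQ0
        have hlt := hmono _ hspec
        refine ⟨Nat.findGreatest (fun j => (2:ℝ)^(j+1)*(a i - b i) ≤ a i) J,
          hspec, hlt, ?_⟩
        exact Nat.findGreatest_is_greatest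
          (P := fun j => (2:ℝ)^(j+1)*(a i - b i) ≤ a i) (n := J)
          (Nat.lt_succ_self _) (by omega)
      refine ⟨j₀, Finset.mem_range.mpr hj₀J, ?_⟩
      rw [hE, Finset.mem_filter]
      exact ⟨hi, hQj₀, not_le.mp hnotQ⟩
    have hsum : ∑ i ∈ P'', (a i - b i)^2 ≤ ∑ j ∈ Finset.range J, ∑ i ∈ E j, (a i - b i)^2 := by
      have hrw : ∀ j, ∑ i ∈ E j, (a i - b i)^2
          = ∑ i ∈ P'', (if 2^(j+1)*(a i - b i) ≤ a i ∧ a i < 2^(j+2)*(a i - b i)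
              then (a i - b i)^2 else 0) := by
        intro j
        rw [hE, Finset.sum_filter]
      calc ∑ i ∈ P'', (a i - b i)^2
          ≤ ∑ i ∈ P'', ∑ j ∈ Finset.range J,
              (if 2^(j+1)*(a i - b i) ≤ a i ∧ a i < 2^(j+2)*(a i - b i)
                then (a i - b i)^2 else 0) := by
            refine Finset.sum_le_sum fun i hi => ?_
            obtain ⟨j₀, hj₀r, hj₀E⟩ := cover i hi
            rw [hE, Finset.mem_filter] at hj₀E
            have hcnd : 2^(j₀+1)*(a i - b i) ≤ a i ∧ a i < 2^(j₀+2)*(a i - b i) := hj₀E.2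
            have := Finset.single_le_sum (f := fun j =>
              (if 2^(j+1)*(a i - b i) ≤ a i ∧ a i < 2^(j+2)*(a i - b i)
                then (a i - b i)^2 else 0))
              (fun j _ => by positivity) hj₀r
            exact le_trans (le_of_eq (if_pos hcnd).symm) this
        _ = ∑ j ∈ Finset.range J, ∑ i ∈ E j, (a i - b i)^2 := by
            rw [Finset.sum_comm]
            exact Finset.sum_congr rfl fun j _ => (hrw j).symm
    obtain ⟨j, hjr, hj⟩ : ∃ j ∈ Finset.range J, h/(4*J) ≤ ∑ i ∈ E j, (a i - b i)^2 := by
      apply Finset.exists_le_of_sum_le (Finset.nonempty_range_iff.mpr (by omega : J ≠ 0))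
      rw [Finset.sum_const, Finset.card_range, nsmul_eq_mul]
      calc (J:ℝ) * (h/(4*J)) = h/4 := by field_simp
        _ ≤ ∑ i ∈ P'', (a i - b i)^2 := hPbig
        _ ≤ ∑ j ∈ Finset.range J, ∑ i ∈ E j, (a i - b i)^2 := hsum
    -- the chosen bucket
    set t : ℝ := (2:ℝ)^(j+1) with htdef
    have ht2 : (2:ℝ) ≤ t := by
      rw [htdef]
      calc (2:ℝ) = 2^1 := by norm_num
        _ ≤ 2^(j+1) := by
          apply pow_le_pow_right₀ (by norm_num : (1:ℝ) ≤ 2) (by omega)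
    have ht0 : (0:ℝ) < t := by linarith
    have mem : ∀ i ∈ E j, 0 < a i - b i ∧ 0 ≤ b i ∧
        t*(a i - b i) ≤ a i ∧ a i < 2*t*(a i - b i) := by
      intro i hi
      rw [hE, Finset.mem_filter, hP'', Finset.mem_filter, hP', Finset.mem_filter,
        hP, Finset.mem_filter] at hi
      obtain ⟨⟨⟨⟨-, hba⟩, -⟩, -⟩, hc1, hc2⟩ := hi
      have h22 : (2:ℝ)^(j+2) = 2*t := by rw [htdef]; ring
      exact ⟨by linarith, hb i, hc1, by rw [← h22]; exact hc2⟩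
    set H := ∑ i ∈ E j, (a i - b i)^2 with hH
    set u := ∑ i ∈ E j, (a i)^2 with hu
    set v := ∑ i ∈ E j, (b i)^2 with hv
    have hH0 : 0 < H := lt_of_lt_of_le (by positivity) hj
    have hu0 : (0:ℝ) ≤ u := Finset.sum_nonneg fun i _ => sq_nonneg _
    have F1 : t^2*H ≤ u := by
      rw [hH, Finset.mul_sum]
      refine Finset.sum_le_sum fun i hi => ?_
      obtain ⟨h1, h2, h3, h4⟩ := mem i hi
      nlinarith
    have F2 : u ≤ 4*t^2*H := by
      rw [hH, Finset.mul_sum, hu]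
      refine Finset.sum_le_sum fun i hi => ?_
      obtain ⟨h1, h2, h3, h4⟩ := mem i hi
      nlinarith
    have F3 : t*H ≤ u - v := by
      rw [hu, hv, ← Finset.sum_sub_distrib, hH, Finset.mul_sum]
      refine Finset.sum_le_sum fun i hi => ?_
      obtain ⟨h1, h2, h3, h4⟩ := mem i hi
      nlinarith
    have F4 : v ≤ u := by
      rw [hu, hv]
      refine Finset.sum_le_sum fun i hi => ?_
      obtain ⟨h1, h2, h3, h4⟩ := mem i hi
      nlinarith
    have hHm : h/α/16 ≤ H := by
      refine le_trans ?_ hj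
      rw [div_div]
      apply div_le_div_of_nonneg_left hh.le (by positivity)
      nlinarith
    refine ⟨E j, F4, ?_, ?_⟩
    · have hx : (0:ℝ) ≤ (t^2 - 4)*H := mul_nonneg (by nlinarith) hH0.le
      linarith
    · have F3' : (0:ℝ) ≤ t*H := by positivity
      have G1 : (t*H)*(t*H) ≤ (u-v)*(u-v) := mul_self_le_mul_self F3' F3
      have G1' : t^2*H^2 ≤ (u-v)^2 := by nlinarith [G1]
      have G2 : u*H ≤ 4*t^2*H*H := mul_le_mul_of_nonneg_right F2 hH0.le
      have G3 : u*(h/α/16) ≤ u*H := mul_le_mul_of_nonneg_left hHm hu0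
      nlinarith [G1', G2, G3]

set_option maxHeartbeats 2000000 in
/-- Sample complexity upper bound via an efficient binary-output `ε`-LDP channel. -/
theorem stmt3 :
    ∃ c : ℝ, 0 < c ∧
      ∀ (k : ℕ) (p q : Fin k → ℝ), IsDist p → IsDist q →
        0 < hellingerSq p q → hellingerSq p q ≤ 1 / Real.exp 1 →
        ∀ ε : ℝ, 1 ≤ ε →
          ∃ T : Matrix (Fin 2) (Fin k) ℝ, IsLDP ε T ∧
            c * max (tvDist p q ^ 2)
                ((hellingerSq p q / Real.log (1 / hellingerSq p q)) *
                  min 1 (Real.exp ε * hellingerSq p q / Real.log (1 / hellingerSq p q)))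
              ≤ hellingerSq (T.mulVec p) (T.mulVec q) := by
  refine ⟨1/2^20, by norm_num, ?_⟩
  intro k p q hp hq hpos hle ε hε
  have hexp1 : (2:ℝ) ≤ Real.exp 1 := by nlinarith [Real.exp_one_gt_d9]
  have hE : Real.exp 1 ≤ Real.exp ε := Real.exp_le_exp.mpr hε
  have hh2 : hellingerSq p q ≤ 1/2 := by
    have h1 : hellingerSq p q * Real.exp 1 ≤ 1 := (le_div_iff₀ (Real.exp_pos 1)).mp hle
    nlinarith
  have hα1 : 1 ≤ Real.log (1 / hellingerSq p q) := by
    rw [Real.le_log_iff_exp_le (by positivity)]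
    rw [le_div_iff₀ hpos]
    have h1 : hellingerSq p q * Real.exp 1 ≤ 1 := (le_div_iff₀ (Real.exp_pos 1)).mp hle
    linarith [mul_comm (Real.exp 1) (hellingerSq p q)]
  have hα0 : (0:ℝ) < Real.log (1 / hellingerSq p q) := by linarith
  have hexpα : 1 / hellingerSq p q
      ≤ Real.exp (Real.log (1 / hellingerSq p q)) :=
    le_of_eq (Real.exp_log (by positivity)).symm
  have hm0 : 0 < hellingerSq p q / Real.log (1 / hellingerSq p q) := by positivity
  have hmda : Real.exp ε * hellingerSq p q / Real.log (1 / hellingerSq p q)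
      = Real.exp ε * (hellingerSq p q / Real.log (1 / hellingerSq p q)) :=
    mul_div_assoc _ _ _
  rcases le_or_gt ((hellingerSq p q / Real.log (1 / hellingerSq p q)) *
      min 1 (Real.exp ε * hellingerSq p q / Real.log (1 / hellingerSq p q)))
      (tvDist p q ^ 2) with hcase | hcase
  · -- TV branch
    rw [max_eq_left hcase]
    have hvu : ∑ i ∈ Finset.univ.filter (fun i => q i < p i), q i
        ≤ ∑ i ∈ Finset.univ.filter (fun i => q i < p i), p i := by
      refine Finset.sum_le_sum fun i hi => ?_
      rw [Finset.mem_filter] at hi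
      exact hi.2.le
    obtain ⟨T, hLDP, hbd⟩ := rr_bound p q hp hq ε hε _ hvu
    refine ⟨T, hLDP, le_trans ?_ hbd⟩
    rw [tv_eq p q hp hq]
    exact arith_tv (Real.exp ε) _ _ hE
      (Finset.sum_nonneg fun i _ => hp.1 i) (sum_le_one p hp _)
  · -- Hellinger branch
    rw [max_eq_right hcase.le]
    by_cases hside : hellingerSq p q / 2 ≤
        ∑ i ∈ Finset.univ.filter (fun i => Real.sqrt (q i) < Real.sqrt (p i)),
          (Real.sqrt (p i) - Real.sqrt (q i))^2
    · -- forward direction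
      obtain ⟨S, hS1, hS2, hS3⟩ := lemA' (fun i => Real.sqrt (p i)) (fun i => Real.sqrt (q i))
        (hellingerSq p q) (Real.log (1 / hellingerSq p q))
        (fun i => Real.sqrt_nonneg _) (fun i => Real.sqrt_nonneg _)
        (by
          rw [Finset.sum_congr rfl (fun i _ => Real.sq_sqrt (hp.1 i))]
          exact hp.2.le)
        hα1 hpos hh2 hexpα hside
      have ep : ∑ i ∈ S, (Real.sqrt (p i))^2 = ∑ i ∈ S, p i :=
        Finset.sum_congr rfl fun i _ => Real.sq_sqrt (hp.1 i)
      have eq' : ∑ i ∈ S, (Real.sqrt (q i))^2 = ∑ i ∈ S, q i :=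
        Finset.sum_congr rfl fun i _ => Real.sq_sqrt (hq.1 i)
      rw [ep, eq'] at hS1
      rw [ep] at hS2
      rw [ep, eq'] at hS3
      obtain ⟨T, hLDP, hbd⟩ := rr_bound p q hp hq ε hε S hS1
      refine ⟨T, hLDP, le_trans ?_ hbd⟩
      rw [hmda]
      exact arith_main (Real.exp ε) _ _ _ hE hm0
        (Finset.sum_nonneg fun i _ => hq.1 i) hS1 (sum_le_one p hp S) hS2 hS3
    · -- swapped direction
      push_neg at hside
      have htot : ∑ i ∈ Finset.univ.filter
            (fun i => Real.sqrt (q i) < Real.sqrt (p i)),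
            (Real.sqrt (p i) - Real.sqrt (q i))^2
          + ∑ i ∈ Finset.univ.filter
            (fun i => ¬ Real.sqrt (q i) < Real.sqrt (p i)),
            (Real.sqrt (p i) - Real.sqrt (q i))^2
          = hellingerSq p q :=
        Finset.sum_filter_add_sum_filter_not _ _ _
      have hsubset : Finset.univ.filter (fun i => Real.sqrt (p i) < Real.sqrt (q i))
          ⊆ Finset.univ.filter (fun i => ¬ Real.sqrt (q i) < Real.sqrt (p i)) := by
        intro i hi
        rw [Finset.mem_filter] at hi ⊢
        exact ⟨hi.1, lt_asymm hi.2⟩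
      have hsub : ∑ i ∈ Finset.univ.filter
            (fun i => Real.sqrt (p i) < Real.sqrt (q i)),
            (Real.sqrt (p i) - Real.sqrt (q i))^2
          = ∑ i ∈ Finset.univ.filter
            (fun i => ¬ Real.sqrt (q i) < Real.sqrt (p i)),
            (Real.sqrt (p i) - Real.sqrt (q i))^2 := by
        refine Finset.sum_subset hsubset fun i hi hni => ?_
        rw [Finset.mem_filter] at hi hni
        have h1 : ¬ Real.sqrt (q i) < Real.sqrt (p i) := hi.2
        have h2 : ¬ Real.sqrt (p i) < Real.sqrt (q i) := fun hl => hni ⟨hi.1, hl⟩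
        have : Real.sqrt (p i) = Real.sqrt (q i) :=
          le_antisymm (not_lt.mp h1) (not_lt.mp h2)
        rw [this]; ring
      have hside' : hellingerSq p q / 2 ≤
          ∑ i ∈ Finset.univ.filter (fun i => Real.sqrt (p i) < Real.sqrt (q i)),
            (Real.sqrt (q i) - Real.sqrt (p i))^2 := by
        have hflip : ∑ i ∈ Finset.univ.filter
              (fun i => Real.sqrt (p i) < Real.sqrt (q i)),
              (Real.sqrt (q i) - Real.sqrt (p i))^2
            = ∑ i ∈ Finset.univ.filter
              (fun i => Real.sqrt (p i) < Real.sqrt (q i)),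
              (Real.sqrt (p i) - Real.sqrt (q i))^2 :=
          Finset.sum_congr rfl fun i _ => by ring
        rw [hflip, hsub]
        linarith
      obtain ⟨S, hS1, hS2, hS3⟩ := lemA' (fun i => Real.sqrt (q i)) (fun i => Real.sqrt (p i))
        (hellingerSq p q) (Real.log (1 / hellingerSq p q))
        (fun i => Real.sqrt_nonneg _) (fun i => Real.sqrt_nonneg _)
        (by
          rw [Finset.sum_congr rfl (fun i _ => Real.sq_sqrt (hq.1 i))]
          exact hq.2.le)
        hα1 hpos hh2 hexpα hside'
      have ep : ∑ i ∈ S, (Real.sqrt (p i))^2 = ∑ i ∈ S, p i :=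
        Finset.sum_congr rfl fun i _ => Real.sq_sqrt (hp.1 i)
      have eq' : ∑ i ∈ S, (Real.sqrt (q i))^2 = ∑ i ∈ S, q i :=
        Finset.sum_congr rfl fun i _ => Real.sq_sqrt (hq.1 i)
      rw [ep, eq'] at hS1
      rw [eq'] at hS2
      rw [ep, eq'] at hS3
      obtain ⟨T, hLDP, hbd⟩ := rr_bound q p hq hp ε hε S hS1
      refine ⟨T, hLDP, ?_⟩
      rw [hell_comm (T.mulVec p) (T.mulVec q)]
      refine le_trans ?_ hbd
      rw [hmda]
      exact arith_main (Real.exp ε) _ _ _ hE hm0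
        (Finset.sum_nonneg fun i _ => hp.1 i) hS1 (sum_le_one q hq S) hS2 hS3
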